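/- Let K be a field, let N ≥ 2 be an integer, and let x : ℤ → K be a sequence with x_{j+N} = x_j and x_j ≠ 0 for all j ∈ ℤ. Define F : ℤ → K by F_j := 1 + Σ_{k=0}^{N-2} Π_{m=0}^{k} x_{j-m}, and assume F_j ≠ 0 for all j. Setting Y_j := x_j · F_{j-1} / F_j, one has for every j ∈ ℤ: 1/Y_j + Y_{j-1}/x_j = 1 + 1/x_j. (Lemma 4.2.1.) -/

import Mathlib

/-- Lemma 4.2.1: with `Y j = x j * F (j-1) / F j`, one has
`1 / Y j + Y (j-1) / x j = 1 + 1 / x j`. -/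
theorem stmt_1 (K : Type*) [Field K] (N : ℕ) (hN : 2 ≤ N) (x : ℤ → K)
    (hper : ∀ j : ℤ, x (j + N) = x j) (hx : ∀ j : ℤ, x j ≠ 0)
    (F : ℤ → K)
    (hF : ∀ j : ℤ, F j = 1 + ∑ k ∈ Finset.range (N - 1), ∏ m ∈ Finset.range (k + 1),
      x (j - (m : ℤ)))
    (hFne : ∀ j : ℤ, F j ≠ 0)
    (Y : ℤ → K) (hY : ∀ j : ℤ, Y j = x j * F (j - 1) / F j) :
    ∀ j : ℤ, 1 / Y j + Y (j - 1) / x j = 1 + 1 / x j := by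
  obtain ⟨n, rfl⟩ := Nat.exists_eq_add_of_le hN
  have hrec : ∀ j : ℤ, F j = 1 + x j * (F (j-1) - ∏ m ∈ Finset.range (n+1), x (j-1-(m:ℤ))) := by
    intro j
    rw [hF j, hF (j-1)]
    have h1 : ∀ k, ∏ m ∈ Finset.range (k+1), x (j - (m:ℤ))
        = x j * ∏ m ∈ Finset.range k, x (j-1-(m:ℤ)) := by
      intro k
      rw [Finset.prod_range_succ']
      simp only [Nat.cast_zero, sub_zero, Nat.cast_add, Nat.cast_one]
      rw [mul_comm]
      congr 1
      apply Finset.prod_congr rfl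
      intro m _
      congr 1
      ring
    have h2 : (2 + n - 1) = n + 1 := by omega
    rw [h2]
    simp only [h1]
    rw [← Finset.mul_sum, Finset.sum_range_succ' (fun k => ∏ m ∈ Finset.range k, x (j-1-(m:ℤ))),
      Finset.sum_range_succ]
    simp only [Finset.range_zero, Finset.prod_empty]
    ring
  have hshift : ∀ j : ℤ, x (j-1) * ∏ m ∈ Finset.range (n+1), x (j-1-1-(m:ℤ))
      = x j * ∏ m ∈ Finset.range (n+1), x (j-1-(m:ℤ)) := by
    intro j
    have l : x (j-1) * ∏ m ∈ Finset.range (n+1), x (j-1-1-(m:ℤ))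
        = ∏ m ∈ Finset.range (n+2), x (j-1-(m:ℤ)) := by
      rw [Finset.prod_range_succ' (fun m => x (j-1-(m:ℤ))) (n+1)]
      have hc : ∀ i ∈ Finset.range (n+1), x (j-1-((i+1:ℕ):ℤ)) = x (j-1-1-(i:ℤ)) := by
        intro i _
        congr 1
        push_cast
        ring
      rw [Finset.prod_congr rfl hc]
      norm_num [mul_comm]
    have r : x j * ∏ m ∈ Finset.range (n+1), x (j-1-(m:ℤ))
        = ∏ m ∈ Finset.range (n+2), x (j-1-(m:ℤ)) := by
      have e : x (j - 1 - ((n+1 : ℕ) : ℤ)) = x j := by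
        have h := hper (j - ((2+n : ℕ) : ℤ))
        rw [sub_add_cancel] at h
        rw [show (j - 1 - ((n+1:ℕ):ℤ)) = j - ((2+n:ℕ):ℤ) by push_cast; ring, h]
      rw [Finset.prod_range_succ (fun m => x (j-1-(m:ℤ))) (n+1), e, mul_comm]
    rw [l, r]
  have hkey : ∀ j : ℤ, F j + x (j-1) * F (j-1-1) = (1 + x j) * F (j-1) := by
    intro j
    linear_combination hrec j - hrec (j-1) + hshift j
  intro j
  rw [hY j, hY (j-1)]
  have h1 := hx j; have h2 := hx (j-1); have h3 := hFne j
  have h4 := hFne (j-1); have h5 := hFne (j-1-1)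
  field_simp
  linear_combination hkey j
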